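/- In ℂ[x,y], the intersection over all pairs (ℓ_1, ℓ_2) of linearly independent linear forms of the ideals (ℓ_1^m, ℓ_2^m) equals the ideal (x,y)^{2m-1}. -/

import Mathlib

open MvPolynomial

noncomputable section
namespace Stmt4

/-- The exponent vector (i,j). -/
def D (i j : ℕ) : Fin 2 →₀ ℕ := Finsupp.single 0 i + Finsupp.single 1 j

@[simp] lemma D_apply0 (i j : ℕ) : D i j 0 = i := by simp [D]
@[simp] lemma D_apply1 (i j : ℕ) : D i j 1 = j := by simp [D]

lemma eq_D (d : Fin 2 →₀ ℕ) : d = D (d 0) (d 1) := by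
  ext a; fin_cases a <;> simp [D]

lemma D_eq_iff {i j k l : ℕ} : D i j = D k l ↔ i = k ∧ j = l := by
  constructor
  · intro h
    have h0 := congrArg (fun f : Fin 2 →₀ ℕ => f 0) h
    have h1 := congrArg (fun f : Fin 2 →₀ ℕ => f 1) h
    simp at h0 h1
    exact ⟨h0, h1⟩
  · rintro ⟨rfl, rfl⟩; rfl

lemma monomial_D {S : Type*} [CommSemiring S] (i j : ℕ) (c : S) :
    (monomial (D i j) c : MvPolynomial (Fin 2) S) = C c * X 0 ^ i * X 1 ^ j := by
  rw [X_pow_eq_monomial, X_pow_eq_monomial, C_apply, monomial_mul, monomial_mul]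
  simp [D]

lemma coeff_CXX {S : Type*} [CommSemiring S] (a : S) (k l i j : ℕ) :
    coeff (D i j) (C a * X 0 ^ k * X 1 ^ l : MvPolynomial (Fin 2) S)
      = if k = i ∧ l = j then a else 0 := by
  rw [← monomial_D, coeff_monomial]
  by_cases h : D k l = D i j
  · rw [if_pos h, if_pos (D_eq_iff.mp h)]
  · rw [if_neg h, if_neg (fun hc => h (D_eq_iff.mpr hc))]

end Stmt4

namespace Stmt4
open Finsupp in
lemma degree_two (d : Fin 2 →₀ ℕ) : d.degree = d 0 + d 1 := by
  rw [Finsupp.degree_apply]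
  rw [Finset.sum_subset (Finset.subset_univ d.support)
    (fun x _ hx => by simpa using Finsupp.notMem_support_iff.mp hx)]
  simp [Fin.sum_univ_two]

lemma sup_pow_le {A : Type*} [CommRing A] (I J : Ideal A) (n k : ℕ) :
    (I ⊔ J) ^ (n + k + 1) ≤ I ^ (n + 1) ⊔ J ^ (k + 1) := by
  rw [← Ideal.add_eq_sup, add_pow, Ideal.sum_eq_sup]
  apply Finset.sup_le
  intro i hi
  simp only [Finset.mem_range] at hi
  by_cases hn : n + 1 ≤ i
  · exact Ideal.mul_le_left.trans (Ideal.mul_le_left.trans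
      ((Ideal.pow_le_pow_right hn).trans le_sup_left))
  · refine Ideal.mul_le_left.trans (Ideal.mul_le_right.trans
      ((Ideal.pow_le_pow_right ?_).trans le_sup_right))
    omega

/-- Every homogeneous linear form is a combination of `X 0` and `X 1`. -/
lemma linear_eq {ℓ : MvPolynomial (Fin 2) ℂ} (h : ℓ.IsHomogeneous 1) :
    ℓ = C (coeff (D 1 0) ℓ) * X 0 + C (coeff (D 0 1) ℓ) * X 1 := by
  ext d
  rw [coeff_add]
  by_cases hd : d.degree = 1
  · rw [degree_two] at hd
    have : d = D 1 0 ∨ d = D 0 1 := by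
      rcases Nat.eq_zero_or_pos (d 0) with h0 | h0
      · right; rw [eq_D d, h0]; congr 1; omega
      · left; rw [eq_D d]
        have : d 0 = 1 := by omega
        rw [this]; congr 1; omega
    have e0 : (C (coeff (D 1 0) ℓ) * X 0 : MvPolynomial (Fin 2) ℂ)
        = C (coeff (D 1 0) ℓ) * X 0 ^ 1 * X 1 ^ 0 := by ring
    have e1 : (C (coeff (D 0 1) ℓ) * X 1 : MvPolynomial (Fin 2) ℂ)
        = C (coeff (D 0 1) ℓ) * X 0 ^ 0 * X 1 ^ 1 := by ring
    rcases this with rfl | rfl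
    · rw [e0, e1, coeff_CXX, coeff_CXX, if_pos, if_neg] <;> simp [D_eq_iff]
    · rw [e0, e1, coeff_CXX, coeff_CXX, if_neg, if_pos] <;> simp [D_eq_iff]
  · rw [h.coeff_eq_zero hd]
    rw [degree_two] at hd
    have hd0 : ¬ (d = D 1 0) := fun hc => by
      rw [hc] at hd; simp [degree_two] at hd
    have hd1 : ¬ (d = D 0 1) := fun hc => by
      rw [hc] at hd; simp [degree_two] at hd
    rw [eq_D d] at hd0 hd1 ⊢
    have e0 : (C (coeff (D 1 0) ℓ) * X 0 : MvPolynomial (Fin 2) ℂ)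
        = C (coeff (D 1 0) ℓ) * X 0 ^ 1 * X 1 ^ 0 := by ring
    have e1 : (C (coeff (D 0 1) ℓ) * X 1 : MvPolynomial (Fin 2) ℂ)
        = C (coeff (D 0 1) ℓ) * X 0 ^ 0 * X 1 ^ 1 := by ring
    rw [e0, e1, coeff_CXX, coeff_CXX]
    rw [if_neg, if_neg] <;> simp [D_eq_iff] <;> omega

end Stmt4

namespace Stmt4

lemma span_XX_le {ℓ₁ ℓ₂ : MvPolynomial (Fin 2) ℂ} (h1 : ℓ₁.IsHomogeneous 1)
    (h2 : ℓ₂.IsHomogeneous 1) (hli : LinearIndependent ℂ ![ℓ₁, ℓ₂]) :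
    (Ideal.span {X 0, X 1} : Ideal (MvPolynomial (Fin 2) ℂ)) ≤ Ideal.span {ℓ₁, ℓ₂} := by
  have e1 := linear_eq h1
  have e2 := linear_eq h2
  set a := coeff (D 1 0) ℓ₁ with ha
  set b := coeff (D 0 1) ℓ₁ with hb
  set c := coeff (D 1 0) ℓ₂ with hc
  set d := coeff (D 0 1) ℓ₂ with hd
  have key1 : C d * ℓ₁ - C b * ℓ₂ = C (a * d - b * c) * X 0 := by
    rw [e1, e2, map_sub, map_mul, map_mul]; ring
  have key2 : C a * ℓ₂ - C c * ℓ₁ = C (a * d - b * c) * X 1 := by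
    rw [e1, e2, map_sub, map_mul, map_mul]; ring
  have hΔ : a * d - b * c ≠ 0 := by
    intro h0
    rw [h0, map_zero, zero_mul] at key1 key2
    have r1 : d • ℓ₁ + (-b) • ℓ₂ = 0 := by
      rw [smul_eq_C_mul, smul_eq_C_mul, map_neg]
      linear_combination key1
    have r2 : (-c) • ℓ₁ + a • ℓ₂ = 0 := by
      rw [smul_eq_C_mul, smul_eq_C_mul, map_neg]
      linear_combination key2
    obtain ⟨hd0, hb0⟩ := LinearIndependent.pair_iff.mp hli _ _ r1
    obtain ⟨hc0, ha0⟩ := LinearIndependent.pair_iff.mp hli _ _ r2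
    have : ℓ₁ = 0 := by
      rw [e1, ha0, neg_eq_zero.mp hb0]; simp
    exact hli.ne_zero 0 (by simpa using this)
  rw [Ideal.span_le]
  have hm1 : ℓ₁ ∈ Ideal.span ({ℓ₁, ℓ₂} : Set (MvPolynomial (Fin 2) ℂ)) :=
    Ideal.subset_span (by simp)
  have hm2 : ℓ₂ ∈ Ideal.span ({ℓ₁, ℓ₂} : Set (MvPolynomial (Fin 2) ℂ)) :=
    Ideal.subset_span (by simp)
  rintro x (rfl | rfl)
  · have : X 0 = C (a * d - b * c)⁻¹ * (C d * ℓ₁ - C b * ℓ₂) := by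
      rw [key1, ← mul_assoc, ← map_mul, inv_mul_cancel₀ hΔ]; simp
    rw [this]
    exact Ideal.mul_mem_left _ _ (Ideal.sub_mem _ (Ideal.mul_mem_left _ _ hm1)
      (Ideal.mul_mem_left _ _ hm2))
  · have : X 1 = C (a * d - b * c)⁻¹ * (C a * ℓ₂ - C c * ℓ₁) := by
      rw [key2, ← mul_assoc, ← map_mul, inv_mul_cancel₀ hΔ]; simp
    rw [this]
    exact Ideal.mul_mem_left _ _ (Ideal.sub_mem _ (Ideal.mul_mem_left _ _ hm2)
      (Ideal.mul_mem_left _ _ hm1))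

lemma easy_dir (m : ℕ) (hm : 1 ≤ m) {ℓ₁ ℓ₂ : MvPolynomial (Fin 2) ℂ}
    (h1 : ℓ₁.IsHomogeneous 1) (h2 : ℓ₂.IsHomogeneous 1)
    (hli : LinearIndependent ℂ ![ℓ₁, ℓ₂]) :
    (Ideal.span {X 0, X 1} : Ideal (MvPolynomial (Fin 2) ℂ)) ^ (2 * m - 1)
      ≤ Ideal.span {ℓ₁ ^ m, ℓ₂ ^ m} := by
  have step1 : (Ideal.span {X 0, X 1} : Ideal (MvPolynomial (Fin 2) ℂ)) ^ (2 * m - 1)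
      ≤ (Ideal.span {ℓ₁, ℓ₂}) ^ (2 * m - 1) :=
    Ideal.pow_right_mono (span_XX_le h1 h2 hli) _
  refine step1.trans ?_
  have hsplit : Ideal.span ({ℓ₁, ℓ₂} : Set (MvPolynomial (Fin 2) ℂ))
      = Ideal.span {ℓ₁} ⊔ Ideal.span {ℓ₂} := by
    rw [Ideal.span_insert]
  have hpow : 2 * m - 1 = (m - 1) + (m - 1) + 1 := by omega
  rw [hsplit, hpow]
  refine (sup_pow_le _ _ _ _).trans ?_
  have hm' : m - 1 + 1 = m := by omega
  rw [hm', Ideal.span_singleton_pow, Ideal.span_singleton_pow, Ideal.span_insert]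

end Stmt4

namespace Stmt4

lemma mem_pow_span (n : ℕ) (f : MvPolynomial (Fin 2) ℂ)
    (h : ∀ d : Fin 2 →₀ ℕ, d 0 + d 1 < n → coeff d f = 0) :
    f ∈ (Ideal.span {X 0, X 1} : Ideal (MvPolynomial (Fin 2) ℂ)) ^ n := by
  rw [f.as_sum]
  apply Ideal.sum_mem
  intro d hd
  have hdeg : n ≤ d 0 + d 1 := by
    by_contra hc; push_neg at hc
    exact (mem_support_iff.mp hd) (h d hc)
  rw [eq_D d, monomial_D, mul_assoc]
  apply Ideal.mul_mem_left
  apply Ideal.pow_le_pow_right hdeg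
  rw [pow_add]
  exact Ideal.mul_mem_mul
    (Ideal.pow_mem_pow (Ideal.subset_span (by simp)) _)
    (Ideal.pow_mem_pow (Ideal.subset_span (by simp)) _)

lemma coeff_zero_of_mem {S : Type*} [CommRing S] {m : ℕ} {g : MvPolynomial (Fin 2) S}
    (hg : g ∈ Ideal.span ({X 0 ^ m, X 1 ^ m} : Set (MvPolynomial (Fin 2) S)))
    {i j : ℕ} (hi : i < m) (hj : j < m) : coeff (D i j) g = 0 := by
  obtain ⟨a, b, rfl⟩ := Ideal.mem_span_pair.mp hg
  rw [coeff_add, X_pow_eq_monomial, X_pow_eq_monomial, coeff_mul_monomial',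
    coeff_mul_monomial', if_neg, if_neg]
  · simp
  · rw [Finsupp.single_le_iff]; simpa using by omega
  · rw [Finsupp.single_le_iff]; simpa using by omega

abbrev PS := Polynomial ℂ

/-- The "generic substitution" `x ↦ x - T·y`, `y ↦ y` with a polynomial parameter `T`. -/
def Φ : MvPolynomial (Fin 2) ℂ →+* MvPolynomial (Fin 2) PS :=
  ((aeval ![X 0 - C Polynomial.X * X 1, X 1] :
      MvPolynomial (Fin 2) PS →ₐ[PS] MvPolynomial (Fin 2) PS) :
    MvPolynomial (Fin 2) PS →+* MvPolynomial (Fin 2) PS).comp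
    (map (Polynomial.C : ℂ →+* PS))

lemma Φ_monomial (p q : ℕ) (c : ℂ) :
    Φ (monomial (D p q) c)
      = C (Polynomial.C c) * (X 0 - C Polynomial.X * X 1) ^ p * X 1 ^ q := by
  rw [Φ, RingHom.comp_apply, map_monomial, monomial_D]
  simp only [map_mul, map_pow, AlgHom.coe_toRingHom, aeval_C, aeval_X,
    Matrix.cons_val_zero, Matrix.cons_val_one, Matrix.head_cons]
  rfl

lemma KC (p q i j : ℕ) (c : ℂ) :
    coeff (D i j) (C (Polynomial.C c) * (X 0 - C Polynomial.X * X 1) ^ p * X 1 ^ q :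
        MvPolynomial (Fin 2) PS)
      = if i ≤ p ∧ p + q = i + j then
          Polynomial.C c * (-Polynomial.X) ^ (p - i) * (p.choose i : PS) else 0 := by
  rw [sub_eq_add_neg, add_pow, Finset.mul_sum, Finset.sum_mul, coeff_sum]
  have hterm : ∀ k ∈ Finset.range (p + 1),
      coeff (D i j) (C (Polynomial.C c) *
          (X 0 ^ k * (-(C Polynomial.X * X 1)) ^ (p - k) *
            ((p.choose k : ℕ) : MvPolynomial (Fin 2) PS)) * X 1 ^ q)
        = if k = i ∧ p - k + q = j then
            Polynomial.C c * (-Polynomial.X) ^ (p - k) * (p.choose k : PS) else 0 := by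
    intro k hk
    have e : C (Polynomial.C c) *
          (X 0 ^ k * (-(C Polynomial.X * X 1)) ^ (p - k) *
            ((p.choose k : ℕ) : MvPolynomial (Fin 2) PS)) * X 1 ^ q
        = C (Polynomial.C c * (-Polynomial.X) ^ (p - k) * (p.choose k : PS))
            * X 0 ^ k * X 1 ^ (p - k + q) := by
      simp only [map_mul, map_pow, map_neg, map_natCast]
      ring
    rw [e, coeff_CXX]
  rw [Finset.sum_congr rfl hterm]
  by_cases h : i ≤ p ∧ p + q = i + j
  · rw [if_pos h]
    rw [Finset.sum_eq_single_of_mem i (Finset.mem_range.mpr (by omega))]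
    rw [if_pos ⟨rfl, by omega⟩]
    intro k hk hki
    rw [if_neg (fun hc => hki hc.1)]
  · rw [if_neg h, Finset.sum_eq_zero]
    intro k hk
    have hkp : k ≤ p := by
      have := Finset.mem_range.mp hk; omega
    rw [if_neg]
    rintro ⟨rfl, hkj⟩
    exact h ⟨hkp, by omega⟩

end Stmt4

namespace Stmt4

lemma extract (m : ℕ) (f : MvPolynomial (Fin 2) ℂ)
    (h : ∀ i j, i < m → j < m → coeff (D i j) (Φ f) = 0)
    (u v : ℕ) (hv : v < m) (huv : u + v ≤ 2 * m - 2) : coeff (D u v) f = 0 := by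
  classical
  set i := min u (m - 1) with hi_def
  set r := u - i with hr_def
  set j := u + v - i with hj_def
  have hm1 : 1 ≤ m := by omega
  have hiu : i ≤ u := by omega
  have hi : i < m := by omega
  have hj : j < m := by omega
  have h0 := h i j hi hj
  have expand : coeff (D i j) (Φ f)
      = ∑ d ∈ f.support, coeff (D i j) (Φ (monomial d (coeff d f))) := by
    conv_lhs => rw [f.as_sum, map_sum, coeff_sum]
  rw [expand] at h0
  have hP := congrArg (fun P : PS => P.coeff r) h0
  simp only [Polynomial.finset_sum_coeff, Polynomial.coeff_zero] at hP
  have hterm : ∀ d ∈ f.support,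
      (coeff (D i j) (Φ (monomial d (coeff d f)))).coeff r
        = if d = D u v then (-1 : ℂ) ^ r * (u.choose i : ℂ) * coeff d f else 0 := by
    intro d _
    rw [eq_D d, Φ_monomial, KC]
    by_cases hA : i ≤ d 0 ∧ d 0 + d 1 = i + j
    · rw [if_pos hA]
      obtain ⟨hA1, hA2⟩ := hA
      have e2 : Polynomial.C (coeff (D (d 0) (d 1)) f) * (-Polynomial.X) ^ (d 0 - i)
            * ((d 0).choose i : PS)
          = Polynomial.C (coeff (D (d 0) (d 1)) f * (-1 : ℂ) ^ (d 0 - i)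
              * ((d 0).choose i : ℂ)) * Polynomial.X ^ (d 0 - i) := by
        simp only [map_mul, map_pow, map_neg, map_one, map_natCast]
        ring
      rw [e2, Polynomial.coeff_C_mul, Polynomial.coeff_X_pow]
      by_cases hdr : d 0 - i = r
      · have hd0 : d 0 = u := by omega
        have hd1 : d 1 = v := by omega
        rw [if_pos hdr.symm, if_pos (by rw [hd0, hd1])]
        rw [hd0, hd1, ← hdr, hd0]
        ring
      · rw [if_neg (fun hc => hdr hc.symm), if_neg]
        · ring
        · intro hc
          obtain ⟨hc0, hc1⟩ := D_eq_iff.mp hc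
          omega
    · rw [if_neg hA, if_neg]
      · simp
      · intro hc
        obtain ⟨hc0, hc1⟩ := D_eq_iff.mp hc
        exact hA ⟨by omega, by omega⟩
  rw [Finset.sum_congr rfl hterm,
    Finset.sum_ite_eq' f.support (D u v)
      (fun d => (-1 : ℂ) ^ r * (u.choose i : ℂ) * coeff d f)] at hP
  by_cases hmem : D u v ∈ f.support
  · rw [if_pos hmem] at hP
    have hch : (u.choose i : ℂ) ≠ 0 := Nat.cast_ne_zero.mpr (Nat.choose_pos hiu).ne'
    have hne : ((-1 : ℂ)) ^ r ≠ 0 := pow_ne_zero _ (by norm_num)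
    by_contra hc
    exact absurd hP (mul_ne_zero (mul_ne_zero hne hch) hc)
  · exact notMem_support_iff.mp hmem

end Stmt4

namespace Stmt4

lemma eval_comm (t : ℂ) (f : MvPolynomial (Fin 2) ℂ) :
    map (Polynomial.evalRingHom t) (Φ f)
      = aeval ![X 0 - C t * X 1, X 1] f := by
  have hcomp : (map (Polynomial.evalRingHom t)).comp Φ
      = ((aeval ![X 0 - C t * X 1, X 1] :
          MvPolynomial (Fin 2) ℂ →ₐ[ℂ] MvPolynomial (Fin 2) ℂ) :
        MvPolynomial (Fin 2) ℂ →+* MvPolynomial (Fin 2) ℂ) := by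
    apply MvPolynomial.ringHom_ext
    · intro c
      simp [Φ, aeval_C]
    · intro n
      fin_cases n <;>
        simp [Φ, aeval_X]
  exact RingHom.congr_fun hcomp f

lemma pair_homog1 (t : ℂ) : (X 0 + C t * X 1 : MvPolynomial (Fin 2) ℂ).IsHomogeneous 1 := by
  exact (isHomogeneous_X _ _).add ((isHomogeneous_X _ _).C_mul _)

lemma pair_indep (t : ℂ) :
    LinearIndependent ℂ ![(X 0 + C t * X 1 : MvPolynomial (Fin 2) ℂ), X 1] := by
  rw [LinearIndependent.pair_iff]
  intro s u hsu
  have h1 := congrArg (eval ![(1 : ℂ), 0]) hsu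
  have h2 := congrArg (eval ![(0 : ℂ), 1]) hsu
  simp [smul_eq_C_mul] at h1 h2
  constructor
  · exact h1
  · rw [h1] at h2; simpa using h2

lemma push_mem (m : ℕ) (t : ℂ) (f : MvPolynomial (Fin 2) ℂ)
    (hf : f ∈ Ideal.span ({(X 0 + C t * X 1) ^ m, X 1 ^ m} :
      Set (MvPolynomial (Fin 2) ℂ))) :
    aeval ![X 0 - C t * X 1, X 1] f
      ∈ Ideal.span ({X 0 ^ m, X 1 ^ m} : Set (MvPolynomial (Fin 2) ℂ)) := by
  obtain ⟨a, b, rfl⟩ := Ideal.mem_span_pair.mp hf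
  rw [map_add, map_mul, map_mul, map_pow, map_pow]
  have h1 : aeval ![(X 0 : MvPolynomial (Fin 2) ℂ) - C t * X 1, X 1]
      (X 0 + C t * X 1) = X 0 := by
    simp [aeval_X]
  have h2 : (aeval ![(X 0 : MvPolynomial (Fin 2) ℂ) - C t * X 1, X 1] :
      MvPolynomial (Fin 2) ℂ →ₐ[ℂ] MvPolynomial (Fin 2) ℂ) (X 1) = X 1 := by
    simp only [aeval_X, Matrix.cons_val_one, Matrix.head_cons, Matrix.cons_val_zero]
  rw [h1, h2]
  exact Ideal.add_mem _
    (Ideal.mul_mem_left _ _ (Ideal.subset_span (by simp)))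
    (Ideal.mul_mem_left _ _ (Ideal.subset_span (by simp)))

end Stmt4

namespace Stmt4

def Imeet (m : ℕ) : Ideal (MvPolynomial (Fin 2) ℂ) :=
  ⨅ (ℓ₁ : MvPolynomial (Fin 2) ℂ) (ℓ₂ : MvPolynomial (Fin 2) ℂ)
      (_ : ℓ₁.IsHomogeneous 1) (_ : ℓ₂.IsHomogeneous 1)
      (_ : LinearIndependent ℂ ![ℓ₁, ℓ₂]),
      Ideal.span {ℓ₁ ^ m, ℓ₂ ^ m}

lemma mem_Imeet {m : ℕ} {f : MvPolynomial (Fin 2) ℂ} :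
    f ∈ Imeet m ↔ ∀ ℓ₁ ℓ₂ : MvPolynomial (Fin 2) ℂ, ℓ₁.IsHomogeneous 1 →
      ℓ₂.IsHomogeneous 1 → LinearIndependent ℂ ![ℓ₁, ℓ₂] →
      f ∈ Ideal.span {ℓ₁ ^ m, ℓ₂ ^ m} := by
  simp [Imeet, Ideal.mem_iInf]

lemma hard1 (m : ℕ) (hm : 1 ≤ m) (f : MvPolynomial (Fin 2) ℂ) (hf : f ∈ Imeet m)
    (u v : ℕ) (hv : v < m) (huv : u + v ≤ 2 * m - 2) : coeff (D u v) f = 0 := by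
  apply extract m f ?_ u v hv huv
  intro i j hi hj
  refine Polynomial.funext fun t => ?_
  rw [Polynomial.eval_zero]
  have hmem := mem_Imeet.mp hf (X 0 + C t * X 1) (X 1) (pair_homog1 t)
    (isHomogeneous_X _ _) (pair_indep t)
  have h2 := coeff_zero_of_mem (push_mem m t f hmem) hi hj
  rw [← eval_comm, coeff_map] at h2
  simpa using h2

lemma swap_mem (m : ℕ) {f : MvPolynomial (Fin 2) ℂ} (hf : f ∈ Imeet m) :
    rename (Equiv.swap (0 : Fin 2) 1) f ∈ Imeet m := by
  rw [mem_Imeet] at hf ⊢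
  intro ℓ₁ ℓ₂ h1 h2 hli
  set e := Equiv.swap (0 : Fin 2) 1 with he
  have hee : ∀ p : MvPolynomial (Fin 2) ℂ, rename e (rename e p) = p := by
    intro p
    rw [rename_rename]
    have : (⇑e ∘ ⇑e) = id := by funext x; simp [e, Equiv.swap_apply_self]
    rw [this, rename_id, AlgHom.id_apply]
  have hr1 : (rename e ℓ₁).IsHomogeneous 1 := h1.rename_isHomogeneous
  have hr2 : (rename e ℓ₂).IsHomogeneous 1 := h2.rename_isHomogeneous
  have hinj : Function.Injective
      (rename e : MvPolynomial (Fin 2) ℂ → MvPolynomial (Fin 2) ℂ) :=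
    rename_injective _ e.injective
  have hlin : LinearIndependent ℂ ![rename e ℓ₁, rename e ℓ₂] := by
    have hmap := hli.map'
      ((rename e : MvPolynomial (Fin 2) ℂ →ₐ[ℂ] MvPolynomial (Fin 2) ℂ)).toLinearMap
      (LinearMap.ker_eq_bot.mpr hinj)
    convert hmap using 1
    funext k; fin_cases k <;> rfl
    all_goals rfl
  have hmem := hf (rename e ℓ₁) (rename e ℓ₂) hr1 hr2 hlin
  obtain ⟨a, b, hab⟩ := Ideal.mem_span_pair.mp hmem
  rw [← hab, map_add, map_mul, map_mul, map_pow, map_pow, hee, hee]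
  exact Ideal.mem_span_pair.mpr ⟨rename e a, rename e b, rfl⟩

lemma coeff_swap (f : MvPolynomial (Fin 2) ℂ) (u v : ℕ) :
    coeff (D u v) f = coeff (D v u) (rename (Equiv.swap (0 : Fin 2) 1) f) := by
  have h := coeff_rename_mapDomain (⇑(Equiv.swap (0 : Fin 2) 1))
    (Equiv.injective _) f (D u v)
  have hmap : Finsupp.mapDomain (⇑(Equiv.swap (0 : Fin 2) 1)) (D u v) = D v u := by
    rw [D, Finsupp.mapDomain_add, Finsupp.mapDomain_single, Finsupp.mapDomain_single]
    simp [D, Equiv.swap_apply_left, Equiv.swap_apply_right, add_comm]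
  rw [hmap] at h
  exact h.symm

lemma Imeet_eq (m : ℕ) (hm : 1 ≤ m) :
    Imeet m = (Ideal.span {(X 0 : MvPolynomial (Fin 2) ℂ), X 1}) ^ (2 * m - 1) := by
  apply le_antisymm
  · intro f hf
    apply mem_pow_span
    intro d hd
    have huv : d 0 + d 1 ≤ 2 * m - 2 := by omega
    rw [eq_D d]
    by_cases hv : d 1 < m
    · exact hard1 m hm f hf (d 0) (d 1) hv huv
    · have hu : d 0 < m := by omega
      rw [coeff_swap]
      exact hard1 m hm _ (swap_mem m hf) (d 1) (d 0) hu (by omega)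
  · simp only [Imeet, le_iInf_iff]
    intro ℓ₁ ℓ₂ h1 h2 hli
    exact easy_dir m hm h1 h2 hli

end Stmt4
end

theorem stmt_4 (m : ℕ) (hm : 1 ≤ m) :
    (⨅ (ℓ₁ : MvPolynomial (Fin 2) ℂ) (ℓ₂ : MvPolynomial (Fin 2) ℂ)
        (_ : ℓ₁.IsHomogeneous 1) (_ : ℓ₂.IsHomogeneous 1)
        (_ : LinearIndependent ℂ ![ℓ₁, ℓ₂]),
        Ideal.span {ℓ₁ ^ m, ℓ₂ ^ m}) =
      (Ideal.span {(X 0 : MvPolynomial (Fin 2) ℂ), X 1}) ^ (2 * m - 1) := by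
  exact Stmt4.Imeet_eq m hm
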